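/- Let (q_n) be a sequence of real numbers, (k_n) a sequence of nonnegative reals with k_n = o(n), and (τ_n) a sequence of nonnegative integers with τ_n = o(n), and let C ≥ 0. Suppose that for all n, m ∈ ℕ, q_{n+τ_n+m} ≤ q_n + q_m + k_n + C·τ_n. Then the limit of q_n/n as n → ∞ exists in [-∞, +∞) and equals inf_{n} (q_n + k_n + C·τ_n)/(n + τ_n). -/

import Mathlib

open Filter Asymptotics

private lemma stmt1_iterate (q : ℕ → ℝ) (k : ℕ → ℝ) (τ : ℕ → ℕ) (C : ℝ)
    (hsub : ∀ n m : ℕ, q (n + τ n + m) ≤ q n + q m + k n + C * τ n)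
    (m : ℕ) : ∀ j x : ℕ, q (j * (m + τ m) + x) ≤ j * (q m + k m + C * τ m) + q x := by
  intro j
  induction j with
  | zero => simp
  | succ j ih =>
    intro x
    have h1 := hsub m (j * (m + τ m) + x)
    have he : (j + 1) * (m + τ m) + x = m + τ m + (j * (m + τ m) + x) := by ring
    rw [he]
    calc q (m + τ m + (j * (m + τ m) + x))
        ≤ q m + q (j * (m + τ m) + x) + k m + C * τ m := h1
      _ ≤ q m + (j * (q m + k m + C * τ m) + q x) + k m + C * τ m := by linarith [ih x]
      _ = (↑(j + 1) : ℝ) * (q m + k m + C * τ m) + q x := by push_cast; ring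

theorem stmt1 (q : ℕ → ℝ) (k : ℕ → ℝ) (τ : ℕ → ℕ) (C : ℝ)
    (hk0 : ∀ n, 0 ≤ k n)
    (hk : (fun n => k n) =o[atTop] (fun n => (n : ℝ)))
    (hτ : (fun n => (τ n : ℝ)) =o[atTop] (fun n => (n : ℝ)))
    (hC : 0 ≤ C)
    (hsub : ∀ n m : ℕ, q (n + τ n + m) ≤ q n + q m + k n + C * τ n) :
    Tendsto (fun n : ℕ => ((q n / n : ℝ) : EReal)) atTop
      (nhds (⨅ n : ℕ,
        (((q (n + 1) + k (n + 1) + C * τ (n + 1)) / ((n + 1 : ℕ) + τ (n + 1) : ℝ) : ℝ) : EReal))) := by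
  set a : ℕ → ℝ := fun m => (q m + k m + C * τ m) / ((m : ℝ) + (τ m : ℝ)) with ha
  set f : ℕ → EReal := fun n : ℕ => ((q n / n : ℝ) : EReal) with hf
  set L : EReal := ⨅ n : ℕ, ((a (n + 1) : ℝ) : EReal) with hL
  -- limsup ≤ L
  have hsup : limsup f atTop ≤ L := by
    rw [hL]
    refine le_iInf fun m' => ?_
    set m := m' + 1 with hm
    set p := m + τ m with hp
    have hp0 : 0 < p := by omega
    have hpR : (0 : ℝ) < p := by exact_mod_cast hp0
    set b := q m + k m + C * τ m with hb
    set M : ℝ := (Finset.range p).sup' ⟨0, Finset.mem_range.2 hp0⟩ q with hM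
    have key : ∀ N : ℕ, 1 ≤ N → q N / N ≤ b / p + (|b| + M) / N := by
      intro N hN
      have hN0 : (0 : ℝ) < N := by exact_mod_cast hN
      set j := N / p with hj
      set r := N % p with hr
      have hNr : j * p + r = N := by rw [hj, hr, Nat.mul_comm]; exact Nat.div_add_mod N p
      have hqN : q N ≤ (j : ℝ) * b + q r := by
        have := stmt1_iterate q k τ C hsub m j r
        rwa [hNr] at this
      have hqr : q r ≤ M := Finset.le_sup' q (Finset.mem_range.2 (Nat.mod_lt N hp0))
      have hj1 : (j : ℝ) * p ≤ N := by
        have : j * p ≤ N := by omega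
        exact_mod_cast this
      have hj2 : (N : ℝ) < ((j : ℝ) + 1) * p := by
        have hrp : r < p := Nat.mod_lt N hp0
        have h : N < (j + 1) * p := by
          calc N = j * p + r := hNr.symm
            _ < j * p + p := Nat.add_lt_add_left hrp _
            _ = (j + 1) * p := by ring
        exact_mod_cast h
      have hjb : (j : ℝ) * b ≤ (N : ℝ) / p * b + |b| := by
        have hjle : (j : ℝ) ≤ (N : ℝ) / p := by
          rw [le_div_iff₀ hpR]; linarith
        have hjge : (N : ℝ) / p - 1 ≤ (j : ℝ) := by
          rw [sub_le_iff_le_add, div_le_iff₀ hpR]; linarith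
        rcases le_total 0 b with hb0 | hb0
        · nlinarith [abs_nonneg b]
        · nlinarith [neg_abs_le b, abs_nonneg b]
      rw [div_le_iff₀ hN0]
      have hrhs : (b / p + (|b| + M) / N) * N = (N : ℝ) / p * b + |b| + M := by
        field_simp; ring
      rw [hrhs]
      calc q N ≤ (j : ℝ) * b + q r := hqN
        _ ≤ (j : ℝ) * b + M := by linarith
        _ ≤ (N : ℝ) / p * b + |b| + M := by linarith
    have hg : Tendsto (fun N : ℕ => b / p + (|b| + M) / N) atTop (nhds (b / p)) := by
      have h1 : Tendsto (fun N : ℕ => (|b| + M) / N) atTop (nhds 0) := by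
        have := tendsto_one_div_atTop_nhds_zero_nat.const_mul (|b| + M)
        simpa [div_eq_mul_inv] using this
      simpa using tendsto_const_nhds.add h1
    have hgE : Tendsto (fun N : ℕ => ((b / p + (|b| + M) / N : ℝ) : EReal)) atTop
        (nhds ((b / p : ℝ) : EReal)) := EReal.tendsto_coe.2 hg
    have hle : limsup f atTop ≤ limsup (fun N : ℕ => ((b / p + (|b| + M) / N : ℝ) : EReal)) atTop := by
      refine limsup_le_limsup ?_
      filter_upwards [eventually_ge_atTop 1] with N hN
      exact EReal.coe_le_coe_iff.2 (key N hN)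
    have hbpa : b / (p : ℝ) = a m := by
      rw [ha, hb, hp]
      push_cast
      ring_nf
    calc limsup f atTop ≤ ((b / p : ℝ) : EReal) := hle.trans_eq hgE.limsup_eq
      _ = ((a (m' + 1) : ℝ) : EReal) := by rw [hbpa]
  -- L ≤ liminf
  have hinf : L ≤ liminf f atTop := by
    by_cases hbot : L = ⊥
    · rw [hbot]; exact bot_le
    have htop : L ≠ ⊤ := by
      refine ne_top_of_le_ne_top (EReal.coe_ne_top (a 1)) ?_
      exact iInf_le _ 0
    set ℓ := L.toReal with hℓdef
    have hℓ : ((ℓ : ℝ) : EReal) = L := EReal.coe_toReal htop hbot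
    have hla : ∀ n : ℕ, ℓ ≤ a (n + 1) := by
      intro n
      exact EReal.coe_le_coe_iff.1 (hℓ.symm ▸ iInf_le (fun n : ℕ => ((a (n + 1) : ℝ) : EReal)) n)
    have hlow : ∀ n : ℕ, 1 ≤ n → ℓ - |ℓ| * ((τ n : ℝ) / n) - (k n + C * τ n) / n ≤ q n / n := by
      intro n hn
      have hn0 : (0 : ℝ) < n := by exact_mod_cast hn
      have hnt : (0 : ℝ) < (n : ℝ) + τ n := by positivity
      have han : ℓ ≤ a n := by
        obtain ⟨n', rfl⟩ : ∃ n', n = n' + 1 := ⟨n - 1, by omega⟩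
        exact hla n'
      have hq : q n = a n * ((n : ℝ) + τ n) - k n - C * τ n := by
        rw [ha]
        field_simp
        ring
      have hlhs : ℓ - |ℓ| * ((τ n : ℝ) / n) - (k n + C * τ n) / n
          = (ℓ * n - |ℓ| * τ n - (k n + C * τ n)) / n := by
        field_simp
      rw [hlhs]
      gcongr ?_ / _
      rw [hq]
      have h1 : ℓ * ((n : ℝ) + τ n) ≤ a n * ((n : ℝ) + τ n) :=
        mul_le_mul_of_nonneg_right han hnt.le
      have h2 : -|ℓ| * (τ n : ℝ) ≤ ℓ * τ n :=
        mul_le_mul_of_nonneg_right (neg_abs_le ℓ) (Nat.cast_nonneg _)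
      nlinarith
    have h1 : Tendsto (fun n : ℕ => (τ n : ℝ) / n) atTop (nhds 0) := hτ.tendsto_div_nhds_zero
    have h2 : Tendsto (fun n : ℕ => k n / n) atTop (nhds 0) := hk.tendsto_div_nhds_zero
    have hh : Tendsto (fun n : ℕ => ℓ - |ℓ| * ((τ n : ℝ) / n) - (k n + C * τ n) / n) atTop
        (nhds ℓ) := by
      have heq : (fun n : ℕ => ℓ - |ℓ| * ((τ n : ℝ) / n) - (k n + C * τ n) / n)
          = fun n : ℕ => ℓ - |ℓ| * ((τ n : ℝ) / n) - (k n / n + C * ((τ n : ℝ) / n)) :=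
        funext fun n => by rw [add_div, mul_div_assoc]
      rw [heq]
      have : Tendsto (fun n : ℕ => ℓ - |ℓ| * ((τ n : ℝ) / n) - (k n / n + C * ((τ n : ℝ) / n)))
          atTop (nhds (ℓ - |ℓ| * 0 - (0 + C * 0))) :=
        (tendsto_const_nhds.sub (tendsto_const_nhds.mul h1)).sub
          (h2.add (tendsto_const_nhds.mul h1))
      simpa using this
    have hhE : Tendsto (fun n : ℕ => ((ℓ - |ℓ| * ((τ n : ℝ) / n) - (k n + C * τ n) / n : ℝ) : EReal))
        atTop (nhds ((ℓ : ℝ) : EReal)) := EReal.tendsto_coe.2 hh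
    have : ((ℓ : ℝ) : EReal) ≤ liminf f atTop := by
      rw [← hhE.liminf_eq]
      refine liminf_le_liminf ?_
      filter_upwards [eventually_ge_atTop 1] with n hn
      exact EReal.coe_le_coe_iff.2 (hlow n hn)
    rwa [hℓ] at this
  exact tendsto_of_le_liminf_of_limsup_le hinf hsup
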